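/- (Finalized pairs keep good stretch.) Let G be a weighted graph with maximum edge weight W > 0, let k = 2R+1 for an integer R ≥ 0, and let H ⊆ G be a subgraph. Let a, b, s, s′ be vertices such that dist_H(a,s) ≤ R·W, dist_H(b,s′) ≤ R·W, and dist_H(s,s′) ≤ k·dist_G(s,s′) − k²·W. Then dist_H(a,b) ≤ k·dist_G(a,b); in fact dist_H(a,b) < k·dist_G(a,b) (strictly, since the computation gives dist_H(a,b) ≤ k·dist_G(a,b) − W). -/

import Mathlib

/- Weighted graphs: a `SimpleGraph V` together with a symmetric weight function
`w : V → V → ℝ≥0` that is positive on edges.  The weight of a walk is the sum of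
its edge weights, and `wDist G w u v` is the shortest-path distance in `G`
(`∞` if `u` and `v` are not connected). -/

open scoped ENNReal

noncomputable def walkWeight {V : Type*} {G : SimpleGraph V} (w : V → V → NNReal)
    {u v : V} (p : G.Walk u v) : ℝ≥0∞ :=
  (p.darts.map fun d => (w d.toProd.1 d.toProd.2 : ℝ≥0∞)).sum

/-- Shortest-path distance in `G` w.r.t. the weights `w`. -/
noncomputable def wDist {V : Type*} (G : SimpleGraph V) (w : V → V → NNReal) (u v : V) : ℝ≥0∞ :=
  ⨅ p : G.Walk u v, walkWeight w p

open Classical in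
/-- `Wmax G w` is the maximum edge weight of `G`. -/
noncomputable def Wmax {V : Type*} [Fintype V] (G : SimpleGraph V) (w : V → V → NNReal) : NNReal :=
  Finset.univ.sup fun p : V × V => if G.Adj p.1 p.2 then w p.1 p.2 else 0

lemma walkWeight_append {V : Type*} {G : SimpleGraph V} (w : V → V → NNReal)
    {u v x : V} (p : G.Walk u v) (q : G.Walk v x) :
    walkWeight w (p.append q) = walkWeight w p + walkWeight w q := by
  simp [walkWeight, SimpleGraph.Walk.darts_append]

lemma wDist_triangle {V : Type*} (G : SimpleGraph V) (w : V → V → NNReal) (u v x : V) :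
    wDist G w u x ≤ wDist G w u v + wDist G w v x := by
  have h : wDist G w u v + wDist G w v x
      = ⨅ p : G.Walk u v, ⨅ q : G.Walk v x, (walkWeight w p + walkWeight w q) := by
    rw [wDist, wDist, ENNReal.iInf_add]
    exact iInf_congr fun p => ENNReal.add_iInf
  rw [h]
  refine le_iInf₂ fun p q => ?_
  rw [← walkWeight_append]
  exact iInf_le _ _

lemma walkWeight_mapLe {V : Type*} {G H : SimpleGraph V} (h : H ≤ G) (w : V → V → NNReal)
    {u v : V} (p : H.Walk u v) : walkWeight w (p.mapLe h) = walkWeight w p := by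
  induction p with
  | nil => rfl
  | cons ha p ih =>
    simp only [SimpleGraph.Walk.mapLe, SimpleGraph.Walk.map_cons, walkWeight,
      SimpleGraph.Walk.darts_cons, List.map_cons, List.sum_cons,
      SimpleGraph.Walk.darts_map, List.map_map,
      SimpleGraph.Hom.ofLE, SimpleGraph.Hom.mapDart, Function.comp] at *
    rfl

lemma wDist_mono {V : Type*} {G H : SimpleGraph V} (h : H ≤ G) (w : V → V → NNReal)
    (u v : V) : wDist G w u v ≤ wDist H w u v := by
  refine le_iInf fun p => ?_
  calc wDist G w u v ≤ walkWeight w (p.mapLe h) := iInf_le _ _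
    _ = walkWeight w p := walkWeight_mapLe h w p

lemma walkWeight_reverse {V : Type*} {G : SimpleGraph V} {w : V → V → NNReal}
    (hsymm : ∀ u v, w u v = w v u) {u v : V} (p : G.Walk u v) :
    walkWeight w p.reverse = walkWeight w p := by
  simp only [walkWeight, SimpleGraph.Walk.darts_reverse, List.map_map, List.map_reverse,
    List.sum_reverse]
  congr 1
  refine List.map_congr_left fun d _ => ?_
  simp [SimpleGraph.Dart.symm, hsymm d.toProd.1 d.toProd.2]

lemma wDist_symm {V : Type*} {G : SimpleGraph V} {w : V → V → NNReal}
    (hsymm : ∀ u v, w u v = w v u) (u v : V) : wDist G w u v = wDist G w v u := by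
  have key : ∀ x y : V, wDist G w x y ≤ wDist G w y x := by
    intro x y
    refine le_iInf fun p => ?_
    calc wDist G w x y ≤ walkWeight w p.reverse := iInf_le _ _
      _ = walkWeight w p := walkWeight_reverse hsymm p
  exact le_antisymm (key u v) (key v u)

/-- **Lemma (finalized pairs keep good stretch).** Let `G` have maximum edge weight
`W_max(G) > 0`, let `k = 2R+1`, and `H ⊆ G`.  If `dist_H(a,s) ≤ R·W`,
`dist_H(b,s') ≤ R·W`, and the pair `(s,s')` is finalized, i.e.
`dist_H(s,s') ≤ k·dist_G(s,s') − k²·W` (subtraction-free form), then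
`dist_H(a,b) ≤ k·dist_G(a,b)`; in fact `dist_H(a,b) ≤ k·dist_G(a,b) − W`
(again in subtraction-free form, giving strict inequality). -/
theorem finalized_pairs_good_stretch {V : Type*} [Fintype V]
    (G H : SimpleGraph V) (hHG : H ≤ G)
    (w : V → V → NNReal)
    (hsymm : ∀ u v, w u v = w v u)
    (hpos : ∀ u v, G.Adj u v → 0 < w u v)
    (hWpos : 0 < Wmax G w)
    (R k : ℕ) (hk : k = 2 * R + 1)
    (a b s s' : V)
    (has : wDist H w a s ≤ (R : ℝ≥0∞) * (Wmax G w : ℝ≥0∞))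
    (hbs' : wDist H w b s' ≤ (R : ℝ≥0∞) * (Wmax G w : ℝ≥0∞))
    (hfin : wDist H w s s' + ((k ^ 2 : ℕ) : ℝ≥0∞) * (Wmax G w : ℝ≥0∞) ≤
      (k : ℝ≥0∞) * wDist G w s s') :
    wDist H w a b ≤ (k : ℝ≥0∞) * wDist G w a b ∧
      wDist H w a b + (Wmax G w : ℝ≥0∞) ≤ (k : ℝ≥0∞) * wDist G w a b := by
  set W : ℝ≥0∞ := (Wmax G w : ℝ≥0∞) with hW
  have h1 : wDist H w a b ≤ wDist H w a s + wDist H w s s' + wDist H w b s' := by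
    calc wDist H w a b ≤ wDist H w a s + wDist H w s b := wDist_triangle H w a s b
      _ ≤ wDist H w a s + (wDist H w s s' + wDist H w s' b) :=
          add_le_add_right (wDist_triangle H w s s' b) _
      _ = wDist H w a s + wDist H w s s' + wDist H w b s' := by
          rw [wDist_symm hsymm s' b, add_assoc]
  have hsa : wDist G w s a ≤ (R : ℝ≥0∞) * W :=
    le_trans (le_trans (wDist_mono hHG w s a) (le_of_eq (wDist_symm hsymm s a))) has
  have hbs : wDist G w b s' ≤ (R : ℝ≥0∞) * W :=
    le_trans (wDist_mono hHG w b s') hbs'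
  have h2 : wDist G w s s' ≤ (R : ℝ≥0∞) * W + wDist G w a b + (R : ℝ≥0∞) * W := by
    calc wDist G w s s' ≤ wDist G w s a + wDist G w a s' := wDist_triangle G w s a s'
      _ ≤ wDist G w s a + (wDist G w a b + wDist G w b s') :=
          add_le_add_right (wDist_triangle G w a b s') _
      _ ≤ (R : ℝ≥0∞) * W + (wDist G w a b + (R : ℝ≥0∞) * W) :=
          add_le_add hsa (add_le_add_right hbs _)
      _ = (R : ℝ≥0∞) * W + wDist G w a b + (R : ℝ≥0∞) * W := by ring
  have hfinW : ((k ^ 2 : ℕ) : ℝ≥0∞) * W ≠ ⊤ :=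
    ENNReal.mul_ne_top (ENNReal.natCast_ne_top _) ENNReal.coe_ne_top
  have key : wDist H w a b + W ≤ (k : ℝ≥0∞) * wDist G w a b := by
    rw [← ENNReal.add_le_add_iff_right hfinW]
    calc wDist H w a b + W + ((k ^ 2 : ℕ) : ℝ≥0∞) * W
        ≤ (wDist H w a s + wDist H w s s' + wDist H w b s') + W
            + ((k ^ 2 : ℕ) : ℝ≥0∞) * W := by
          exact add_le_add_left (add_le_add_left h1 _) _
      _ = wDist H w a s + wDist H w b s' + W + (wDist H w s s' + ((k ^ 2 : ℕ) : ℝ≥0∞) * W) := by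
          ring
      _ ≤ (R : ℝ≥0∞) * W + (R : ℝ≥0∞) * W + W + (k : ℝ≥0∞) * wDist G w s s' :=
          add_le_add (add_le_add_left (add_le_add has hbs') _) hfin
      _ ≤ (R : ℝ≥0∞) * W + (R : ℝ≥0∞) * W + W
            + (k : ℝ≥0∞) * ((R : ℝ≥0∞) * W + wDist G w a b + (R : ℝ≥0∞) * W) :=
          add_le_add_right (mul_le_mul_right h2 _) _
      _ = (k : ℝ≥0∞) * wDist G w a b + ((k ^ 2 : ℕ) : ℝ≥0∞) * W := by
          subst hk; push_cast; ring
  exact ⟨le_trans le_self_add key, key⟩
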